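/- There exist 2×2 projective measurements on one EPR pair achieving I₃₃₂₂ value 1/4: specifically there exist 2×2 complex projections A₁,A₂,A₃,B₁,B₂,B₃ such that, with ⟨X⊗Y⟩ = ⟨Ψ₂| X⊗Y |Ψ₂⟩ for |Ψ₂⟩ = (|00⟩+|11⟩)/√2, the expression -⟨A₂⊗I⟩ - ⟨I⊗B₁⟩ - 2⟨I⊗B₂⟩ + ⟨A₁⊗B₁⟩ + ⟨A₁⊗B₂⟩ + ⟨A₂⊗B₁⟩ + ⟨A₂⊗B₂⟩ - ⟨A₁⊗B₃⟩ + ⟨A₂⊗B₃⟩ - ⟨A₃⊗B₁⟩ + ⟨A₃⊗B₂⟩ equals 1/4. -/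

import Mathlib

open Matrix Kronecker

noncomputable def ψ₂ : Fin 2 × Fin 2 → ℂ :=
  fun p => if p.1 = p.2 then ((Real.sqrt 2 : ℂ))⁻¹ else 0

noncomputable def E (X Y : Matrix (Fin 2) (Fin 2) ℂ) : ℂ :=
  star ψ₂ ⬝ᵥ (X ⊗ₖ Y).mulVec ψ₂

noncomputable def s : ℂ := (Real.sqrt 3 : ℝ)
noncomputable def r : ℂ := (Real.sqrt 2 : ℝ)

lemma hs : s * s = 3 := by
  simp [s, ← Complex.ofReal_mul, Real.mul_self_sqrt (by norm_num : (3:ℝ) ≥ 0).le]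

lemma hr : r * r = 2 := by
  simp [r, ← Complex.ofReal_mul, Real.mul_self_sqrt (by norm_num : (2:ℝ) ≥ 0).le]

lemma hsstar : (starRingEnd ℂ) s = s := by simp [s]

noncomputable def P1 : Matrix (Fin 2) (Fin 2) ℂ := !![1, 0; 0, 0]
noncomputable def P2 : Matrix (Fin 2) (Fin 2) ℂ := !![3/4, -s/4; -s/4, 1/4]
noncomputable def P3 : Matrix (Fin 2) (Fin 2) ℂ := !![1/4, -s/4; -s/4, 3/4]

lemma proj1 : P1 * P1 = P1 ∧ P1ᴴ = P1 := by
  constructor <;> ext i j <;> fin_cases i <;> fin_cases j <;>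
    simp [P1, Matrix.mul_apply, Fin.sum_univ_succ, Matrix.conjTranspose_apply]

lemma proj2 : P2 * P2 = P2 ∧ P2ᴴ = P2 := by
  constructor <;> ext i j <;> fin_cases i <;> fin_cases j <;>
    simp [P2, Matrix.mul_apply, Fin.sum_univ_succ, Matrix.conjTranspose_apply, hsstar] <;>
    first | linear_combination (1/16 : ℂ) * hs | linear_combination (-1/16 : ℂ) * hs | ring1

lemma proj3 : P3 * P3 = P3 ∧ P3ᴴ = P3 := by
  constructor <;> ext i j <;> fin_cases i <;> fin_cases j <;>
    simp [P3, Matrix.mul_apply, Fin.sum_univ_succ, Matrix.conjTranspose_apply, hsstar] <;>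
    first | linear_combination (1/16 : ℂ) * hs | linear_combination (-1/16 : ℂ) * hs | ring1

set_option maxHeartbeats 1600000 in
theorem stmt_18 :
    ∃ A₁ A₂ A₃ B₁ B₂ B₃ : Matrix (Fin 2) (Fin 2) ℂ,
      (A₁ * A₁ = A₁ ∧ A₁ᴴ = A₁) ∧ (A₂ * A₂ = A₂ ∧ A₂ᴴ = A₂) ∧ (A₃ * A₃ = A₃ ∧ A₃ᴴ = A₃) ∧
      (B₁ * B₁ = B₁ ∧ B₁ᴴ = B₁) ∧ (B₂ * B₂ = B₂ ∧ B₂ᴴ = B₂) ∧ (B₃ * B₃ = B₃ ∧ B₃ᴴ = B₃) ∧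
      -E A₂ 1 - E 1 B₁ - 2 * E 1 B₂ + E A₁ B₁ + E A₁ B₂ + E A₂ B₁ + E A₂ B₂
        - E A₁ B₃ + E A₂ B₃ - E A₃ B₁ + E A₃ B₂ = 1 / 4 := by
  refine ⟨P1, P2, P3, P1, P2, P3, proj1, proj2, proj3, proj1, proj2, proj3, ?_⟩
  have hr' : ((Real.sqrt 2 : ℂ))⁻¹ = r⁻¹ := by simp [r]
  have hrne : r ≠ 0 := by
    intro h; have := hr; rw [h] at this; simp at this
  simp only [E, ψ₂, P1, P2, P3, Matrix.mulVec, dotProduct, Fin.sum_univ_succ,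
    Fintype.sum_prod_type, Matrix.kroneckerMap_apply, Pi.star_apply, hr']
  norm_num [Fin.sum_univ_succ, Matrix.one_apply]
  field_simp
  ring_nf
  have hrstar : (starRingEnd ℂ) r = r := by simp [r]
  have hinv : r⁻¹ = r / 2 := by
    field_simp
    linear_combination -hr
  rw [hrstar, hinv]
  ring_nf
  linear_combination (48 * r) * hs
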